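/- Let P1 be a SPARQL graph pattern, P2 a BGP, and σ : V → V an injective renaming with σ(x) = x for all x ∈ var(P1) and σ(x) ∉ var(P1) ∪ var(P2) for all x ∈ var(P2) \ var(P1). Then for every RDF graph G, ⟦FE(P1, P2σ)⟧_G = ⟦FE(P1,P2)⟧_G and ⟦FNE(P1, P2σ)⟧_G = ⟦FNE(P1,P2)⟧_G, where P2σ is the BGP obtained from P2 by replacing every variable x by σ(x). That is, relabeling by fresh variables the variables of the FILTER (NOT) EXISTS argument that are not shared with the outer pattern does not change the evaluation. -/

import Mathlib

/-!
Formalization of SPARQL graph-pattern syntax and semantics, following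
Pérez et al. and the paper "SPARQL in N3".

* IRIs, blank nodes and literals are three pairwise disjoint infinite sets,
  packaged in the type `RTerm` (the set `T = I ∪ B ∪ L`).
* Variables form a further disjoint infinite set `Var`.
* A pattern term (`PTerm`) is an element of `T ∪ V`.
* A solution mapping is a partial function from variables to RDF terms,
  modeled as `Var → Option RTerm`.
-/

namespace SparqlN3

/-- RDF terms: IRIs, blank nodes, literals — three disjoint infinite sets. -/
inductive RTerm : Type
  | iri : ℕ → RTerm
  | bnode : ℕ → RTerm
  | lit : ℕ → RTerm
deriving DecidableEq

/-- Variables (an infinite set, disjoint from `RTerm` by typing). -/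
abbrev Var : Type := ℕ

/-- Elements of `T ∪ V`. -/
abbrev PTerm : Type := RTerm ⊕ Var

/-- Triple patterns: elements of `(T ∪ V) × (T ∪ V) × (T ∪ V)`. -/
abbrev TriplePat : Type := PTerm × PTerm × PTerm

/-- Ground RDF triples. -/
abbrev Triple : Type := RTerm × RTerm × RTerm

/-- An RDF graph: a set of triples. -/
abbrev Graph : Type := Set Triple

/-- A basic graph pattern: a finite set of triple patterns. -/
abbrev BGP : Type := Finset TriplePat

/-- A (partial) mapping from variables to RDF terms. -/
abbrev Mapping : Type := Var → Option RTerm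

/-- The domain of a mapping. -/
def mdom (μ : Mapping) : Set Var := {x | μ x ≠ none}

/-- A solution mapping has a finite domain. -/
def FiniteDom (μ : Mapping) : Prop := (mdom μ).Finite

/-- Compatibility of two mappings: they agree on the common domain. -/
def compat (μ₁ μ₂ : Mapping) : Prop :=
  ∀ x a b, μ₁ x = some a → μ₂ x = some b → a = b

/-- Union `μ₁ ∪ μ₂` of two (compatible) mappings. -/
def munion (μ₁ μ₂ : Mapping) : Mapping :=
  fun x => (μ₁ x).elim (μ₂ x) some

def varsPT : PTerm → Finset Var
  | .inl _ => ∅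
  | .inr v => {v}

/-- Variables of a triple pattern. -/
def varsTP (t : TriplePat) : Finset Var :=
  varsPT t.1 ∪ varsPT t.2.1 ∪ varsPT t.2.2

/-- Variables of a BGP. -/
def varsBGP (P : BGP) : Finset Var := P.biUnion varsTP

/-- Substitution on a pattern term: replace variables in the domain of `μ`. -/
def substPT (μ : Mapping) : PTerm → PTerm
  | .inl t => .inl t
  | .inr v => (μ v).elim (.inr v) .inl

/-- Substitution `tμ` on a triple pattern (componentwise). -/
def substTP (μ : Mapping) (t : TriplePat) : TriplePat :=
  (substPT μ t.1, substPT μ t.2.1, substPT μ t.2.2)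

/-- Substitution `Pμ` on a BGP (literal replacement of variables in `dom μ`). -/
def substBGP (μ : Mapping) (P : BGP) : BGP := P.image (substTP μ)

/-- View a ground triple as a triple pattern. -/
def toPat (t : Triple) : TriplePat := (.inl t.1, .inl t.2.1, .inl t.2.2)

/-- `InstIn G μ P` : the instantiation `Pμ` is contained in `G`
(every triple pattern of `P` becomes, under `μ`, a ground triple of `G`). -/
def InstIn (G : Graph) (μ : Mapping) (P : BGP) : Prop :=
  ∀ tp ∈ P, ∃ t ∈ G, substTP μ tp = toPat t

/-- Evaluation of a BGP: `⟦P⟧_G = {μ | dom(μ) = var(P) ∧ Pμ ⊆ G}`. -/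
def bgpEval (G : Graph) (P : BGP) : Set Mapping :=
  {μ | mdom μ = ↑(varsBGP P) ∧ InstIn G μ P}

/-- SPARQL graph patterns.  Filter conditions are modeled as predicates
on solution mappings. -/
inductive GP : Type
  | bgp : BGP → GP
  | and : GP → GP → GP
  | union : GP → GP → GP
  | minus : GP → GP → GP
  | fe : GP → GP → GP
  | fne : GP → GP → GP
  | filter : GP → (Mapping → Prop) → GP
  | opt : GP → GP → (Mapping → Prop) → GP

/-- Substitution `Pμ` on a graph pattern, applied componentwise to triple
patterns and recursively through the constructors; for filters, the
predicate is composed with `μ`. -/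
def substGP (μ : Mapping) : GP → GP
  | .bgp P => .bgp (substBGP μ P)
  | .and P₁ P₂ => .and (substGP μ P₁) (substGP μ P₂)
  | .union P₁ P₂ => .union (substGP μ P₁) (substGP μ P₂)
  | .minus P₁ P₂ => .minus (substGP μ P₁) (substGP μ P₂)
  | .fe P₁ P₂ => .fe (substGP μ P₁) (substGP μ P₂)
  | .fne P₁ P₂ => .fne (substGP μ P₁) (substGP μ P₂)
  | .filter P R => .filter (substGP μ P) (fun ν => R (munion μ ν))
  | .opt P₁ P₂ R => .opt (substGP μ P₁) (substGP μ P₂) (fun ν => R (munion μ ν))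

/-- Structural depth (used as termination measure for `eval`). -/
def depth : GP → ℕ
  | .bgp _ => 0
  | .and P₁ P₂ => max (depth P₁) (depth P₂) + 1
  | .union P₁ P₂ => max (depth P₁) (depth P₂) + 1
  | .minus P₁ P₂ => max (depth P₁) (depth P₂) + 1
  | .fe P₁ P₂ => max (depth P₁) (depth P₂) + 1
  | .fne P₁ P₂ => max (depth P₁) (depth P₂) + 1
  | .filter P _ => depth P + 1
  | .opt P₁ P₂ _ => max (depth P₁) (depth P₂) + 1

theorem depth_substGP (μ : Mapping) (P : GP) : depth (substGP μ P) = depth P := by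
  induction P <;> simp [substGP, depth, *]

/-- The scope `sv` of a graph pattern. -/
def sv : GP → Finset Var
  | .bgp P => varsBGP P
  | .and P₁ P₂ => sv P₁ ∪ sv P₂
  | .union P₁ P₂ => sv P₁ ∪ sv P₂
  | .minus P₁ _ => sv P₁
  | .fe P₁ _ => sv P₁
  | .fne P₁ _ => sv P₁
  | .filter P _ => sv P
  | .opt P₁ P₂ _ => sv P₁ ∪ sv P₂

/-- The variables `var(P)` occurring in a graph pattern. -/
def varsGP : GP → Finset Var
  | .bgp P => varsBGP P
  | .and P₁ P₂ => varsGP P₁ ∪ varsGP P₂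
  | .union P₁ P₂ => varsGP P₁ ∪ varsGP P₂
  | .minus P₁ P₂ => varsGP P₁ ∪ varsGP P₂
  | .fe P₁ P₂ => varsGP P₁ ∪ varsGP P₂
  | .fne P₁ P₂ => varsGP P₁ ∪ varsGP P₂
  | .filter P _ => varsGP P
  | .opt P₁ P₂ _ => varsGP P₁ ∪ varsGP P₂

/-- Evaluation `⟦P⟧_G` of SPARQL graph patterns over an RDF graph `G`. -/
def eval (G : Graph) : GP → Set Mapping
  | .bgp P => bgpEval G P
  | .and P₁ P₂ =>
      {μ | ∃ μ₁ ∈ eval G P₁, ∃ μ₂ ∈ eval G P₂, compat μ₁ μ₂ ∧ μ = munion μ₁ μ₂}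
  | .union P₁ P₂ => eval G P₁ ∪ eval G P₂
  | .minus P₁ P₂ =>
      {μ ∈ eval G P₁ | ∀ μ' ∈ eval G P₂, ¬ compat μ μ' ∨ mdom μ ∩ mdom μ' = ∅}
  | .fe P₁ P₂ =>
      {μ ∈ eval G P₁ | (eval G (substGP μ P₂)).Nonempty}
  | .fne P₁ P₂ =>
      {μ ∈ eval G P₁ | eval G (substGP μ P₂) = ∅}
  | .filter P R => {μ ∈ eval G P | R μ}
  | .opt P₁ P₂ R =>
      {μ | ∃ μ₁ ∈ eval G P₁, ∃ μ₂ ∈ eval G P₂,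
          compat μ₁ μ₂ ∧ R (munion μ₁ μ₂) ∧ μ = munion μ₁ μ₂}
        ∪ {μ₁ ∈ eval G P₁ | ¬ ∃ μ₂ ∈ eval G P₂, compat μ₁ μ₂ ∧ R (munion μ₁ μ₂)}
termination_by P => depth P
decreasing_by all_goals (simp [depth_substGP, depth]; try omega)

/-- A pattern contains no UNION and no OPT subpattern. -/
def NoUnionOpt : GP → Prop
  | .bgp _ => True
  | .and P₁ P₂ => NoUnionOpt P₁ ∧ NoUnionOpt P₂
  | .union _ _ => False
  | .minus P₁ P₂ => NoUnionOpt P₁ ∧ NoUnionOpt P₂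
  | .fe P₁ P₂ => NoUnionOpt P₁ ∧ NoUnionOpt P₂
  | .fne P₁ P₂ => NoUnionOpt P₁ ∧ NoUnionOpt P₂
  | .filter P _ => NoUnionOpt P
  | .opt _ _ _ => False

/-- Renaming of variables in a pattern term. -/
def renamePT (σ : Var → Var) : PTerm → PTerm
  | .inl t => .inl t
  | .inr v => .inr (σ v)

/-- Renaming of variables in a triple pattern. -/
def renameTP (σ : Var → Var) (t : TriplePat) : TriplePat :=
  (renamePT σ t.1, renamePT σ t.2.1, renamePT σ t.2.2)

/-- Renaming `Qσ` of variables in a BGP. -/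
def renameBGP (σ : Var → Var) (P : BGP) : BGP := P.image (renameTP σ)

/-- Restriction of a mapping to a set of variables. -/
def restrict (μ : Mapping) (S : Finset Var) : Mapping :=
  fun x => if x ∈ S then μ x else none


theorem eval_bgp (G : Graph) (Q : BGP) : eval G (.bgp Q) = bgpEval G Q := by
  rw [eval]

theorem mdom_munion (μ₁ μ₂ : Mapping) :
    mdom (munion μ₁ μ₂) = mdom μ₁ ∪ mdom μ₂ := by
  ext x
  simp only [mdom, munion, Set.mem_setOf_eq, Set.mem_union]
  cases h : μ₁ x <;> simp [h]

theorem mdom_subset_vars (G : Graph) :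
    ∀ P : GP, ∀ μ ∈ eval G P, mdom μ ⊆ ↑(varsGP P) := by
  intro P
  induction P with
  | bgp Q => intro μ hμ; rw [eval_bgp] at hμ
             rw [hμ.1]; simp [varsGP]
  | and P₁ P₂ ih₁ ih₂ =>
      intro μ hμ
      rw [show eval G (.and P₁ P₂) = _ from by rw [eval]] at hμ
      obtain ⟨μ₁, h₁, μ₂, h₂, _, rfl⟩ := hμ
      rw [mdom_munion]
      intro x hx
      rcases hx with hx | hx
      · exact Finset.coe_subset.mpr Finset.subset_union_left (ih₁ μ₁ h₁ hx)
      · exact Finset.coe_subset.mpr Finset.subset_union_right (ih₂ μ₂ h₂ hx)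
  | union P₁ P₂ ih₁ ih₂ =>
      intro μ hμ
      rw [show eval G (.union P₁ P₂) = _ from by rw [eval]] at hμ
      rcases hμ with h | h
      · exact fun x hx => Finset.coe_subset.mpr Finset.subset_union_left (ih₁ μ h hx)
      · exact fun x hx => Finset.coe_subset.mpr Finset.subset_union_right (ih₂ μ h hx)
  | minus P₁ P₂ ih₁ _ =>
      intro μ hμ
      rw [show eval G (.minus P₁ P₂) = _ from by rw [eval]] at hμ
      exact fun x hx => Finset.coe_subset.mpr Finset.subset_union_left (ih₁ μ hμ.1 hx)
  | fe P₁ P₂ ih₁ _ =>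
      intro μ hμ
      rw [show eval G (.fe P₁ P₂) = _ from by rw [eval]] at hμ
      exact fun x hx => Finset.coe_subset.mpr Finset.subset_union_left (ih₁ μ hμ.1 hx)
  | fne P₁ P₂ ih₁ _ =>
      intro μ hμ
      rw [show eval G (.fne P₁ P₂) = _ from by rw [eval]] at hμ
      exact fun x hx => Finset.coe_subset.mpr Finset.subset_union_left (ih₁ μ hμ.1 hx)
  | filter P R ih =>
      intro μ hμ
      rw [show eval G (.filter P R) = _ from by rw [eval]] at hμ
      exact fun x hx => ih μ hμ.1 hx
  | opt P₁ P₂ R ih₁ ih₂ =>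
      intro μ hμ
      rw [show eval G (.opt P₁ P₂ R) = _ from by rw [eval]] at hμ
      rcases hμ with ⟨μ₁, h₁, μ₂, h₂, _, _, rfl⟩ | ⟨h₁, _⟩
      · rw [mdom_munion]
        intro x hx
        rcases hx with hx | hx
        · exact Finset.coe_subset.mpr Finset.subset_union_left (ih₁ μ₁ h₁ hx)
        · exact Finset.coe_subset.mpr Finset.subset_union_right (ih₂ μ₂ h₂ hx)
      · exact fun x hx => Finset.coe_subset.mpr Finset.subset_union_left (ih₁ μ h₁ hx)

theorem varsTP_of_mem (P : BGP) (tp : TriplePat) (h : tp ∈ P) :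
    varsTP tp ⊆ varsBGP P := fun x hx =>
  Finset.mem_biUnion.mpr ⟨tp, h, hx⟩

theorem varsPT_renamePT (σ : Var → Var) (p : PTerm) :
    varsPT (renamePT σ p) = (varsPT p).image σ := by
  cases p <;> simp [renamePT, varsPT]

theorem varsTP_renameTP (σ : Var → Var) (t : TriplePat) :
    varsTP (renameTP σ t) = (varsTP t).image σ := by
  simp [renameTP, varsTP, varsPT_renamePT, Finset.image_union]

theorem varsBGP_renameBGP (σ : Var → Var) (Q : BGP) :
    varsBGP (renameBGP σ Q) = (varsBGP Q).image σ := by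
  ext x
  simp only [varsBGP, renameBGP, Finset.mem_biUnion, Finset.mem_image]
  constructor
  · rintro ⟨tp', ⟨tp, htp, rfl⟩, hx⟩
    rw [varsTP_renameTP] at hx
    obtain ⟨y, hy, rfl⟩ := Finset.mem_image.mp hx
    exact ⟨y, ⟨tp, htp, hy⟩, rfl⟩
  · rintro ⟨y, ⟨tp, htp, hy⟩, rfl⟩
    exact ⟨renameTP σ tp, ⟨tp, htp, rfl⟩,
      by rw [varsTP_renameTP]; exact Finset.mem_image_of_mem _ hy⟩

/-- Commutation of substitution and renaming on a pattern term. -/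
theorem substPT_renamePT (μ : Mapping) (σ : Var → Var) (p : PTerm)
    (h : ∀ v ∈ varsPT p, μ (σ v) = μ v) :
    substPT μ (renamePT σ p) = renamePT σ (substPT μ p) := by
  cases p with
  | inl t => rfl
  | inr v =>
      have hv := h v (by simp [varsPT])
      simp only [renamePT, substPT, hv]
      cases μ v <;> simp [renamePT]

theorem substBGP_renameBGP (μ : Mapping) (σ : Var → Var) (Q : BGP)
    (h : ∀ v ∈ varsBGP Q, μ (σ v) = μ v) :
    substBGP μ (renameBGP σ Q) = renameBGP σ (substBGP μ Q) := by
  unfold substBGP renameBGP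
  rw [Finset.image_image, Finset.image_image]
  apply Finset.image_congr
  intro tp htp
  have hsub := varsTP_of_mem Q tp htp
  obtain ⟨p₁, p₂, p₃⟩ := tp
  simp only [Function.comp_apply, substTP, renameTP, Prod.mk.injEq]
  refine ⟨?_, ?_, ?_⟩ <;>
    apply substPT_renamePT <;>
    intro v hv <;>
    apply h <;>
    apply hsub
  · exact Finset.mem_union_left _ (Finset.mem_union_left _ hv)
  · exact Finset.mem_union_left _ (Finset.mem_union_right _ hv)
  · exact Finset.mem_union_right _ hv

/-- Renaming by an injective map preserves (non)emptiness of BGP evaluation. -/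
theorem bgpEval_rename_nonempty (G : Graph) (σ : Var → Var)
    (hσ : Function.Injective σ) (Q : BGP) :
    (bgpEval G (renameBGP σ Q)).Nonempty ↔ (bgpEval G Q).Nonempty := by
  classical
  have hleft : Function.LeftInverse (Function.invFun σ) σ :=
    Function.leftInverse_invFun hσ
  constructor
  · rintro ⟨ν', hdom, hinst⟩
    refine ⟨fun x => if x ∈ varsBGP Q then ν' (σ x) else none, ?_, ?_⟩
    · ext x
      simp only [mdom, Set.mem_setOf_eq, Finset.coe_mem, Finset.mem_coe]
      constructor
      · intro hx
        by_contra hxQ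
        simp [hxQ] at hx
      · intro hx
        have : σ x ∈ varsBGP (renameBGP σ Q) := by
          rw [varsBGP_renameBGP]; exact Finset.mem_image_of_mem _ hx
        have : σ x ∈ mdom ν' := by rw [hdom]; exact this
        simpa [hx, mdom] using this
    · intro tp htp
      obtain ⟨t, ht, hte⟩ := hinst (renameTP σ tp) (Finset.mem_image_of_mem _ htp)
      refine ⟨t, ht, ?_⟩
      rw [← hte]
      have hsub := varsTP_of_mem Q tp htp
      obtain ⟨p₁, p₂, p₃⟩ := tp
      simp only [substTP, renameTP, Prod.mk.injEq]
      have key : ∀ p : PTerm, varsPT p ⊆ varsBGP Q →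
          substPT (fun x => if x ∈ varsBGP Q then ν' (σ x) else none) p =
            substPT ν' (renamePT σ p) := by
        intro p hp
        cases p with
        | inl t => rfl
        | inr v =>
            have hv : v ∈ varsBGP Q := hp (by simp [varsPT])
            have hne : ν' (σ v) ≠ none := by
              have hm : σ v ∈ mdom ν' := by
                rw [hdom, Finset.mem_coe, varsBGP_renameBGP]
                exact Finset.mem_image_of_mem _ hv
              exact hm
            obtain ⟨a, ha⟩ := Option.ne_none_iff_exists'.mp hne
            simp only [substPT, renamePT, hv, if_pos, ha]
            rfl
      refine ⟨?_, ?_, ?_⟩ <;> apply key <;> intro v hv <;> apply hsub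
      · exact Finset.mem_union_left _ (Finset.mem_union_left _ hv)
      · exact Finset.mem_union_left _ (Finset.mem_union_right _ hv)
      · exact Finset.mem_union_right _ hv
  · rintro ⟨ν, hdom, hinst⟩
    refine ⟨fun x => if x ∈ (varsBGP Q).image σ then ν (Function.invFun σ x)
      else none, ?_, ?_⟩
    · ext x
      simp only [mdom, Set.mem_setOf_eq, Finset.mem_coe, varsBGP_renameBGP]
      constructor
      · intro hx
        by_contra hxQ
        simp [hxQ] at hx
      · intro hx
        obtain ⟨y, hy, rfl⟩ := Finset.mem_image.mp hx
        have hyd : ν y ≠ none := by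
          have : y ∈ mdom ν := by rw [hdom]; exact hy
          exact this
        simpa [hx, hleft y] using hyd
    · intro tp' htp'
      obtain ⟨tp, htp, rfl⟩ := Finset.mem_image.mp htp'
      obtain ⟨t, ht, hte⟩ := hinst tp htp
      refine ⟨t, ht, ?_⟩
      rw [← hte]
      have hsub := varsTP_of_mem Q tp htp
      obtain ⟨p₁, p₂, p₃⟩ := tp
      simp only [substTP, renameTP, Prod.mk.injEq]
      have key : ∀ p : PTerm, varsPT p ⊆ varsBGP Q →
          substPT (fun x => if x ∈ (varsBGP Q).image σ then
              ν (Function.invFun σ x) else none) (renamePT σ p) = substPT ν p := by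
        intro p hp
        cases p with
        | inl t => rfl
        | inr v =>
            have hvQ : v ∈ varsBGP Q := hp (by simp [varsPT])
            have hv : σ v ∈ (varsBGP Q).image σ :=
              Finset.mem_image_of_mem _ hvQ
            have hne : ν v ≠ none := by
              have hm : v ∈ mdom ν := by rw [hdom]; exact hvQ
              exact hm
            obtain ⟨a, ha⟩ := Option.ne_none_iff_exists'.mp hne
            simp only [substPT, renamePT, hv, if_pos, hleft v, ha]
            rfl
      refine ⟨?_, ?_, ?_⟩ <;> apply key <;> intro v hv <;> apply hsub
      · exact Finset.mem_union_left _ (Finset.mem_union_left _ hv)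
      · exact Finset.mem_union_left _ (Finset.mem_union_right _ hv)
      · exact Finset.mem_union_right _ hv

/-- Relabeling by fresh variables the variables of the argument of
FILTER (NOT) EXISTS that are not shared with the outer pattern does not change
the evaluation. -/
theorem fe_fne_relabel (P₁ : GP) (P₂ : BGP) (σ : Var → Var)
    (hσ : Function.Injective σ)
    (hfix : ∀ x ∈ varsGP P₁, σ x = x)
    (hfresh : ∀ x ∈ varsBGP P₂, x ∉ varsGP P₁ → σ x ∉ varsGP P₁ ∪ varsBGP P₂)
    (G : Graph) :
    eval G (.fe P₁ (.bgp (renameBGP σ P₂))) = eval G (.fe P₁ (.bgp P₂)) ∧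
    eval G (.fne P₁ (.bgp (renameBGP σ P₂))) = eval G (.fne P₁ (.bgp P₂)) := by
  have key : ∀ μ ∈ eval G P₁,
      (eval G (substGP μ (.bgp (renameBGP σ P₂)))).Nonempty ↔
        (eval G (substGP μ (.bgp P₂))).Nonempty := by
    intro μ hμ
    have hdom : mdom μ ⊆ ↑(varsGP P₁) := mdom_subset_vars G P₁ μ hμ
    have hcomm : substBGP μ (renameBGP σ P₂) = renameBGP σ (substBGP μ P₂) := by
      apply substBGP_renameBGP
      intro v hv
      by_cases hv1 : v ∈ varsGP P₁
      · rw [hfix v hv1]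
      · have h1 : σ v ∉ varsGP P₁ := fun h =>
          (hfresh v hv hv1) (Finset.mem_union_left _ h)
        have h2 : μ (σ v) = none := by
          by_contra h
          exact h1 (hdom h)
        have h3 : μ v = none := by
          by_contra h
          exact hv1 (hdom h)
        rw [h2, h3]
    show (eval G (.bgp (substBGP μ (renameBGP σ P₂)))).Nonempty ↔
      (eval G (.bgp (substBGP μ P₂))).Nonempty
    rw [hcomm, eval_bgp, eval_bgp]
    exact bgpEval_rename_nonempty G σ hσ (substBGP μ P₂)
  constructor
  · ext μ
    rw [show eval G (.fe P₁ (.bgp (renameBGP σ P₂))) = _ from by rw [eval],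
      show eval G (.fe P₁ (.bgp P₂)) = _ from by rw [eval]]
    simp only [Set.mem_setOf_eq]
    exact ⟨fun ⟨h1, h2⟩ => ⟨h1, (key μ h1).mp h2⟩,
      fun ⟨h1, h2⟩ => ⟨h1, (key μ h1).mpr h2⟩⟩
  · ext μ
    rw [show eval G (.fne P₁ (.bgp (renameBGP σ P₂))) = _ from by rw [eval],
      show eval G (.fne P₁ (.bgp P₂)) = _ from by rw [eval]]
    simp only [Set.mem_setOf_eq, ← Set.not_nonempty_iff_eq_empty]
    exact ⟨fun ⟨h1, h2⟩ => ⟨h1, fun h => h2 ((key μ h1).mpr h)⟩,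
      fun ⟨h1, h2⟩ => ⟨h1, fun h => h2 ((key μ h1).mp h)⟩⟩

end SparqlN3
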